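/- Let φ : ℝⁿ → ℝ be twice continuously differentiable and let f : ℝⁿ → ℝ be continuously differentiable with ∇f Lipschitz continuous on every bounded subset of ℝⁿ. Fix λ > 0, and let sequences x^k ∈ ℝⁿ, d^k ∈ ℝⁿ, t_k ∈ (0, 1] satisfy, for every k: ∇f(x^k) + (1/λ)∇²φ(x^k)d^k = 0 and x^{k+1} = x^k + t_k·d^k. If {x^k} is bounded, then there exists A₀ > 0 such that ‖∇f(x^k)‖ ≤ A₀‖d^{k−1}‖ for all k ≥ 1; in particular, if ‖d^k‖ → 0 then ‖∇f(x^k)‖ → 0. -/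

import Mathlib

open scoped RealInnerProductSpace NNReal

/-- Hessian–vector product `∇²φ(x) d`. -/
noncomputable def hessApply {n : ℕ} (φ : EuclideanSpace ℝ (Fin n) → ℝ)
    (x d : EuclideanSpace ℝ (Fin n)) : EuclideanSpace ℝ (Fin n) :=
  fderiv ℝ (gradient φ) x d

theorem abpg_gradient_bound {n : ℕ}
    (φ f : EuclideanSpace ℝ (Fin n) → ℝ)
    (hφ : ContDiff ℝ 2 φ) (hf : ContDiff ℝ 1 f)
    (hlip : ∀ s : Set (EuclideanSpace ℝ (Fin n)), Bornology.IsBounded s →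
      ∃ K : ℝ≥0, LipschitzOnWith K (gradient f) s)
    (lam : ℝ) (hlam : 0 < lam)
    (x d : ℕ → EuclideanSpace ℝ (Fin n)) (t : ℕ → ℝ)
    (ht : ∀ k, t k ∈ Set.Ioc (0 : ℝ) 1)
    (hopt : ∀ k, gradient f (x k) + (1 / lam) • hessApply φ (x k) (d k) = 0)
    (hupd : ∀ k, x (k + 1) = x k + t k • d k)
    (hxbdd : Bornology.IsBounded (Set.range x)) :
    (∃ A₀ : ℝ, 0 < A₀ ∧ ∀ k : ℕ, 1 ≤ k →
        ‖gradient f (x k)‖ ≤ A₀ * ‖d (k - 1)‖) ∧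
      (Filter.Tendsto (fun k => ‖d k‖) Filter.atTop (nhds 0) →
        Filter.Tendsto (fun k => ‖gradient f (x k)‖) Filter.atTop (nhds 0)) := by
  -- gradient φ is C¹
  have hgrad : ContDiff ℝ 1 (gradient φ) := by
    have : gradient φ = fun y =>
        (InnerProductSpace.toDual ℝ (EuclideanSpace ℝ (Fin n))).symm (fderiv ℝ φ y) := rfl
    rw [this]
    exact ((InnerProductSpace.toDual ℝ (EuclideanSpace ℝ (Fin n))).symm.contDiff).comp
      (hφ.fderiv_right (by norm_num))
  have hcont : Continuous (fderiv ℝ (gradient φ)) := hgrad.continuous_fderiv (by norm_num)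
  -- bound on the Hessian over closure of range x
  have hcpt : IsCompact (closure (Set.range x)) := hxbdd.isCompact_closure
  obtain ⟨M, hM⟩ := hcpt.exists_bound_of_continuousOn
    (hcont.continuousOn : ContinuousOn (fderiv ℝ (gradient φ)) (closure (Set.range x)))
  have hMx : ∀ k, ‖fderiv ℝ (gradient φ) (x k)‖ ≤ M := fun k =>
    hM (x k) (subset_closure (Set.mem_range_self k))
  have hM0 : 0 ≤ M := le_trans (norm_nonneg _) (hMx 0)
  -- pointwise bound: ‖∇f(x k)‖ ≤ (M/lam) ‖d k‖
  have hpt : ∀ k, ‖gradient f (x k)‖ ≤ (M / lam) * ‖d k‖ := by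
    intro k
    have h1 : gradient f (x k) = -((1 / lam) • hessApply φ (x k) (d k)) :=
      eq_neg_of_add_eq_zero_left (hopt k)
    rw [h1, norm_neg, norm_smul]
    have h2 : ‖hessApply φ (x k) (d k)‖ ≤ M * ‖d k‖ := by
      calc ‖fderiv ℝ (gradient φ) (x k) (d k)‖
          ≤ ‖fderiv ℝ (gradient φ) (x k)‖ * ‖d k‖ := ContinuousLinearMap.le_opNorm _ _
        _ ≤ M * ‖d k‖ := by gcongr; exact hMx k
    have h3 : ‖(1 / lam : ℝ)‖ = 1 / lam := by
      rw [Real.norm_eq_abs, abs_of_pos (by positivity)]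
    rw [h3]
    calc (1 / lam) * ‖hessApply φ (x k) (d k)‖ ≤ (1 / lam) * (M * ‖d k‖) := by
          gcongr
      _ = (M / lam) * ‖d k‖ := by ring
  -- Lipschitz constant on range x
  obtain ⟨K, hK⟩ := hlip (Set.range x) hxbdd
  set A₀ : ℝ := (K : ℝ) + M / lam + 1 with hA₀
  have hA₀pos : 0 < A₀ := by positivity
  have key : ∀ k : ℕ, 1 ≤ k → ‖gradient f (x k)‖ ≤ A₀ * ‖d (k - 1)‖ := by
    intro k hk
    obtain ⟨m, rfl⟩ := Nat.exists_eq_add_of_le hk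
    simp only [Nat.add_sub_cancel_left, Nat.add_sub_cancel]
    have hdiff : ‖gradient f (x (1 + m)) - gradient f (x m)‖ ≤ (K : ℝ) * ‖d m‖ := by
      have h1 : dist (gradient f (x (1 + m))) (gradient f (x m)) ≤
          (K : ℝ) * dist (x (1 + m)) (x m) :=
        hK.dist_le_mul _ (Set.mem_range_self _) _ (Set.mem_range_self _)
      rw [dist_eq_norm, dist_eq_norm] at h1
      refine h1.trans ?_
      have h2 : x (1 + m) - x m = t m • d m := by
        rw [Nat.add_comm 1 m, hupd m]; abel
      rw [h2, norm_smul, Real.norm_eq_abs, abs_of_pos (ht m).1]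
      have := (ht m).2
      have hd : 0 ≤ ‖d m‖ := norm_nonneg _
      nlinarith [mul_nonneg (mul_nonneg K.coe_nonneg hd) (sub_nonneg.mpr this)]
    calc ‖gradient f (x (1 + m))‖
        ≤ ‖gradient f (x (1 + m)) - gradient f (x m)‖ + ‖gradient f (x m)‖ := by
          simpa using norm_add_le (gradient f (x (1 + m)) - gradient f (x m)) (gradient f (x m))
      _ ≤ (K : ℝ) * ‖d m‖ + (M / lam) * ‖d m‖ := add_le_add hdiff (hpt m)
      _ ≤ A₀ * ‖d m‖ := by
          have hd : 0 ≤ ‖d m‖ := norm_nonneg _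
          nlinarith
  refine ⟨⟨A₀, hA₀pos, key⟩, ?_⟩
  intro hd0
  have h1 : Filter.Tendsto (fun k : ℕ => A₀ * ‖d (k - 1)‖) Filter.atTop (nhds 0) := by
    have : Filter.Tendsto (fun k : ℕ => ‖d (k - 1)‖) Filter.atTop (nhds 0) :=
      hd0.comp (Filter.tendsto_atTop_atTop.mpr fun b => ⟨b + 1, fun a ha => by omega⟩)
    simpa using this.const_mul A₀
  refine squeeze_zero' (Filter.Eventually.of_forall fun k => norm_nonneg _) ?_ h1
  filter_upwards [Filter.eventually_ge_atTop 1] with k hk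
  exact key k hk
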